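/- Let 𝐭 be an index tuple with indices from {0,...,k−1} and let (a:b) be a string (consecutive integers a, a+1, ..., b) with indices from {0,...,k−2}. Then the concatenation (𝐭, a:b) satisfies the Successor Infix Property if and only if 𝐭 satisfies the SIP and no c ∈ {a,...,b} is a head of 𝐭. -/

import Mathlib

/-- The Successor Infix Property: between any two equal indices of the tuple there is an
occurrence of their successor. -/
def SIP (t : List ℕ) : Prop :=
  ∀ a b : Fin t.length, a < b → t.get a = t.get b →
    ∃ c : Fin t.length, a < c ∧ c < b ∧ t.get c = t.get a + 1

/-- One swap of two adjacent distinct commuting indices (indices differing by ≥ 2). -/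
def CommuteStep (t t' : List ℕ) : Prop :=
  ∃ (u v : List ℕ) (x y : ℕ), x ≠ y ∧ x + 1 ≠ y ∧ y + 1 ≠ x ∧
    t = u ++ x :: y :: v ∧ t' = u ++ y :: x :: v

/-- Equivalence of index tuples: generated by swapping adjacent commuting indices. -/
def TupleEquiv : List ℕ → List ℕ → Prop := Relation.ReflTransGen CommuteStep

/-- The string `(a : b) = (a, a+1, ..., b)`. -/
def strTuple (a b : ℕ) : List ℕ := List.range' a (b + 1 - a)

/-- The tuple `(a_s : b_s, ..., a_1 : b_1)` built from a list of pairs of endpoints. -/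
def buildCSF (ps : List (ℕ × ℕ)) : List ℕ :=
  (ps.map fun p => strTuple p.1 p.2).flatten

/-- `ps` encodes a tuple in column standard form: each pair `(a_j, b_j)` has `a_j ≤ b_j`
and the heads `b_s > b_{s-1} > ... > b_1` are strictly decreasing. -/
def IsCSFDecomp (ps : List (ℕ × ℕ)) : Prop :=
  (∀ pr ∈ ps, pr.1 ≤ pr.2) ∧ List.Chain' (· > ·) (ps.map Prod.snd)

/-- The set of heads of an index tuple `t`: the right endpoints of the strings of the
column standard form of `t`. -/
def headsSet (t : List ℕ) : Set ℕ :=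
  {h | ∃ ps, IsCSFDecomp ps ∧ TupleEquiv t (buildCSF ps) ∧ h ∈ ps.map Prod.snd}

/-- List form of SIP. -/
def LSIP (t : List ℕ) : Prop :=
  ∀ x u m w, t = u ++ x :: (m ++ x :: w) → x + 1 ∈ m

theorem sip_iff_lsip (t : List ℕ) : SIP t ↔ LSIP t := by
  constructor
  · intro h x u m w heq
    have hlen : t.length = u.length + m.length + w.length + 2 := by
      simp [heq]; omega
    have ha : u.length < t.length := by omega
    have hb : (u ++ x :: m).length < t.length := by simp; omega
    have hta : t[u.length] = x := by
      rw [List.getElem_of_eq heq ha, List.getElem_append_right (le_refl u.length)]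
      simp
    have heq2 : t = (u ++ x :: m) ++ x :: w := by simp [heq]
    have htb : t[(u ++ x :: m).length]'hb = x := by
      rw [List.getElem_of_eq heq2 hb, List.getElem_append_right (le_refl _)]
      simp
    obtain ⟨c, hac, hcb, hval⟩ := h ⟨u.length, ha⟩ ⟨(u ++ x :: m).length, hb⟩
      (by simp [Fin.lt_def]) (by simp only [List.get_eq_getElem]; rw [hta, htb])
    have hc1 : u.length < c.val := hac
    have hc2 : c.val < u.length + m.length + 1 := by
      have := hcb
      simp [Fin.lt_def] at this
      omega
    have heq3 : t = (u ++ [x]) ++ (m ++ x :: w) := by simp [heq]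
    have hcv : t[c.val]'c.isLt = m[c.val - (u.length + 1)]'(by omega) := by
      rw [List.getElem_of_eq heq3 c.isLt]
      rw [List.getElem_append_right (by simp; omega)]
      rw [List.getElem_append_left (by simp; omega)]
      congr 1
      simp
    have hxc : t[c.val]'c.isLt = x + 1 := by
      have := hval
      simp [List.get_eq_getElem, hta] at this
      exact this
    rw [hxc] at hcv
    exact hcv ▸ List.getElem_mem _
  · intro h a b hab heq
    have hav : a.val < b.val := hab
    set x := t.get a with hx
    have e1 : t.drop b.val = x :: t.drop (b.val + 1) := by
      rw [List.drop_eq_getElem_cons b.isLt]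
      congr 1
      simp only [hx, List.get_eq_getElem] at heq ⊢
      exact heq.symm
    have e2' : (t.drop (a.val + 1)).drop (b.val - a.val - 1) = t.drop b.val := by
      rw [List.drop_drop]
      congr 1
      omega
    have e3 : t.drop a.val = x :: t.drop (a.val + 1) := by
      rw [List.drop_eq_getElem_cons a.isLt]
      congr 1
    have e4 : t.drop (a.val + 1) =
        (t.drop (a.val + 1)).take (b.val - a.val - 1) ++ (x :: t.drop (b.val + 1)) := by
      conv_lhs => rw [← List.take_append_drop (b.val - a.val - 1) (t.drop (a.val + 1))]
      rw [e2', e1]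
    have hdec : t = t.take a.val ++ x ::
        ((t.drop (a.val + 1)).take (b.val - a.val - 1) ++ x :: t.drop (b.val + 1)) := by
      conv_lhs => rw [← List.take_append_drop a.val t, e3, e4]
    have hm := h x _ _ _ hdec
    obtain ⟨i, hi, hmi⟩ := List.mem_iff_getElem.mp hm
    have hilen : i < b.val - a.val - 1 := by
      have := hi
      simp at this
      omega
    have hidx : a.val + 1 + i < t.length := by have := b.isLt; omega
    refine ⟨⟨a.val + 1 + i, hidx⟩, ?_, ?_, ?_⟩
    · show a.val < a.val + 1 + i
      omega
    · show a.val + 1 + i < b.val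
      omega
    · show t.get ⟨a.val + 1 + i, hidx⟩ = x + 1
      have hti : ((t.drop (a.val + 1)).take (b.val - a.val - 1))[i]'hi = t[a.val + 1 + i]'hidx := by
        rw [List.getElem_take, List.getElem_drop]
      simp only [List.get_eq_getElem]
      rw [← hti, hmi]

/-- The filter keeping only the values `x` and `x+1`. -/
def Fxt (x : ℕ) (t : List ℕ) : List ℕ := t.filter (fun z => z == x || z == x + 1)

lemma Fxt_append (x : ℕ) (s t : List ℕ) : Fxt x (s ++ t) = Fxt x s ++ Fxt x t :=
  List.filter_append _ _

lemma Fxt_cons_self (x : ℕ) (t : List ℕ) : Fxt x (x :: t) = x :: Fxt x t := by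
  simp [Fxt]

lemma Fxt_cons_succ (x : ℕ) (t : List ℕ) : Fxt x ((x + 1) :: t) = (x + 1) :: Fxt x t := by
  simp [Fxt]

lemma mem_of_mem_Fxt {x z : ℕ} {t : List ℕ} (h : z ∈ Fxt x t) : z ∈ t ∧ (z = x ∨ z = x + 1) := by
  simp only [Fxt, List.mem_filter, Bool.or_eq_true, beq_iff_eq] at h
  exact h

lemma self_mem_Fxt {x : ℕ} {t : List ℕ} (h : x ∈ t) : x ∈ Fxt x t := by
  simp [Fxt, List.mem_filter, h]

lemma succ_mem_Fxt {x : ℕ} {t : List ℕ} (h : x + 1 ∈ t) : x + 1 ∈ Fxt x t := by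
  simp [Fxt, List.mem_filter, h]

lemma Fxt_eq_nil {x : ℕ} {t : List ℕ} (h1 : x ∉ t) (h2 : x + 1 ∉ t) : Fxt x t = [] := by
  rw [Fxt, List.filter_eq_nil_iff]
  intro z hz
  simp only [Bool.or_eq_true, beq_iff_eq]
  rintro (rfl | rfl) <;> [exact h1 hz; exact h2 hz]

lemma not_mem_of_Fxt_eq_nil {x : ℕ} {t : List ℕ} (h : Fxt x t = []) : x ∉ t ∧ x + 1 ∉ t := by
  constructor <;> intro hm
  · exact (List.ne_nil_of_mem (self_mem_Fxt hm)) h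
  · exact (List.ne_nil_of_mem (succ_mem_Fxt hm)) h

/-- Splitting a list according to a distinguished element of its filter. -/
lemma filter_split {p : ℕ → Bool} {t l r : List ℕ} {x : ℕ} (h : t.filter p = l ++ x :: r) :
    ∃ u w, t = u ++ x :: w ∧ u.filter p = l ∧ w.filter p = r := by
  induction t generalizing l with
  | nil => simp at h
  | cons aa t ih =>
    by_cases hp : p aa
    · rw [List.filter_cons_of_pos hp] at h
      cases l with
      | nil =>
        rw [List.nil_append] at h
        obtain ⟨rfl, h2⟩ := List.cons_eq_cons.mp h
        exact ⟨[], t, by simp, by simp, h2⟩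
      | cons y l' =>
        obtain ⟨rfl, h2⟩ := List.cons_eq_cons.mp h
        obtain ⟨u, w, h1, h2', h3⟩ := ih h2
        exact ⟨aa :: u, w, by simp [h1], by simp [List.filter_cons_of_pos hp, h2'], h3⟩
    · rw [List.filter_cons_of_neg (by simpa using hp)] at h
      obtain ⟨u, w, h1, h2, h3⟩ := ih h
      exact ⟨aa :: u, w, by simp [h1], by rw [List.filter_cons_of_neg (by simpa using hp), h2], h3⟩

/-- Two equal entries `x` with no `x+1` in between. -/
def Dup (x : ℕ) (t : List ℕ) : Prop :=
  ∃ u m w, t = u ++ x :: (m ++ x :: w) ∧ x + 1 ∉ m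

lemma lsip_iff_not_dup (t : List ℕ) : LSIP t ↔ ∀ x, ¬ Dup x t := by
  constructor
  · rintro h x ⟨u, m, w, heq, hn⟩
    exact hn (h x u m w heq)
  · intro h x u m w heq
    by_contra hn
    exact h x ⟨u, m, w, heq, hn⟩

lemma dup_iff_fxt (x : ℕ) (t : List ℕ) :
    Dup x t ↔ ∃ l r, Fxt x t = l ++ x :: x :: r := by
  constructor
  · rintro ⟨u, m, w, heq, hn⟩
    have hFm : ∀ z ∈ Fxt x m, z = x := by
      intro z hz
      obtain ⟨hzm, hz2⟩ := mem_of_mem_Fxt hz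
      rcases hz2 with rfl | rfl
      · rfl
      · exact absurd hzm hn
    have hF : Fxt x t = Fxt x u ++ x :: (Fxt x m ++ x :: Fxt x w) := by
      rw [heq, Fxt_append, Fxt_cons_self, Fxt_append, Fxt_cons_self]
    cases hFm' : Fxt x m with
    | nil => exact ⟨Fxt x u, Fxt x w, by rw [hF, hFm']; simp⟩
    | cons z rest =>
      have hz : z = x := hFm z (by rw [hFm']; simp)
      refine ⟨Fxt x u, rest ++ x :: Fxt x w, ?_⟩
      rw [hF, hFm', hz]
      simp
  · rintro ⟨l, r, hF⟩
    obtain ⟨u, w1, h1, h2, h3⟩ := filter_split (p := fun z => z == x || z == x + 1) hF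
    have h3' : w1.filter (fun z => z == x || z == x + 1) = [] ++ x :: r := by simpa using h3
    obtain ⟨m, w, h4, h5, h6⟩ := filter_split h3'
    refine ⟨u, m, w, by rw [h1, h4], ?_⟩
    intro hmem
    exact (not_mem_of_Fxt_eq_nil h5).2 hmem

lemma lsip_iff_fxt (t : List ℕ) :
    LSIP t ↔ ∀ x, ¬ ∃ l r, Fxt x t = l ++ x :: x :: r := by
  rw [lsip_iff_not_dup]
  exact forall_congr' fun x => not_congr (dup_iff_fxt x t)

lemma commuteStep_fxt {t t' : List ℕ} (h : CommuteStep t t') (x : ℕ) : Fxt x t = Fxt x t' := by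
  obtain ⟨u, v, y, z, h1, h2, h3, ht, ht'⟩ := h
  subst ht ht'
  rw [Fxt_append, Fxt_append]
  congr 1
  show Fxt x (y :: z :: v) = Fxt x (z :: y :: v)
  have : Fxt x [y] ++ Fxt x [z] = Fxt x [z] ++ Fxt x [y] := by
    by_cases hy : (y == x || y == x + 1) = true <;>
      by_cases hz : (z == x || z == x + 1) = true
    · simp only [Bool.or_eq_true, beq_iff_eq] at hy hz
      omega
    · simp [Fxt, List.filter, hy, hz]
    · simp [Fxt, List.filter, hy, hz]
    · simp [Fxt, List.filter, hy, hz]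
  have e1 : Fxt x (y :: z :: v) = Fxt x [y] ++ Fxt x [z] ++ Fxt x v := by
    rw [← Fxt_append, ← Fxt_append]; rfl
  have e2 : Fxt x (z :: y :: v) = Fxt x [z] ++ Fxt x [y] ++ Fxt x v := by
    rw [← Fxt_append, ← Fxt_append]; rfl
  rw [e1, e2, this]

lemma tupleEquiv_fxt {t s : List ℕ} (h : TupleEquiv t s) (x : ℕ) : Fxt x t = Fxt x s := by
  induction h with
  | refl => rfl
  | tail _ hstep ih => exact ih.trans (commuteStep_fxt hstep x)

lemma tupleEquiv_lsip {t s : List ℕ} (h : TupleEquiv t s) : LSIP t ↔ LSIP s := by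
  rw [lsip_iff_fxt, lsip_iff_fxt]
  refine forall_congr' fun x => ?_
  rw [tupleEquiv_fxt h]

lemma tupleEquiv_perm {t s : List ℕ} (h : TupleEquiv t s) : t.Perm s := by
  induction h with
  | refl => exact List.Perm.refl _
  | tail _ hstep ih =>
    refine ih.trans ?_
    obtain ⟨u, v, y, z, _, _, _, ht, ht'⟩ := hstep
    rw [ht, ht']
    exact (List.Perm.swap z y v).append_left u

lemma commuteStep_append_left {t t' : List ℕ} (s : List ℕ) (h : CommuteStep t t') :
    CommuteStep (s ++ t) (s ++ t') := by
  obtain ⟨u, v, y, z, h1, h2, h3, ht, ht'⟩ := h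
  exact ⟨s ++ u, v, y, z, h1, h2, h3, by simp [ht], by simp [ht']⟩

lemma commuteStep_append_right {t t' : List ℕ} (s : List ℕ) (h : CommuteStep t t') :
    CommuteStep (t ++ s) (t' ++ s) := by
  obtain ⟨u, v, y, z, h1, h2, h3, ht, ht'⟩ := h
  exact ⟨u, v ++ s, y, z, h1, h2, h3, by simp [ht], by simp [ht']⟩

lemma tupleEquiv_append_left {t t' : List ℕ} (s : List ℕ) (h : TupleEquiv t t') :
    TupleEquiv (s ++ t) (s ++ t') :=
  Relation.ReflTransGen.lift (s ++ ·) (fun _ _ hs => commuteStep_append_left s hs) _ _ h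

lemma tupleEquiv_append_right {t t' : List ℕ} (s : List ℕ) (h : TupleEquiv t t') :
    TupleEquiv (t ++ s) (t' ++ s) :=
  Relation.ReflTransGen.lift (· ++ s) (fun _ _ hs => commuteStep_append_right s hs) _ _ h

/-- `x` is "intrinsically a head" of `t`. -/
def Phead (x : ℕ) (t : List ℕ) : Prop := (Fxt x t).getLast? = some x

lemma tupleEquiv_phead {t s : List ℕ} (h : TupleEquiv t s) (x : ℕ) :
    Phead x t ↔ Phead x s := by
  unfold Phead
  rw [tupleEquiv_fxt h]

lemma phead_decomp {x : ℕ} {t : List ℕ} (h : Phead x t) :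
    ∃ u w, t = u ++ x :: w ∧ x ∉ w ∧ x + 1 ∉ w := by
  obtain ⟨l, hl⟩ := List.getLast?_eq_some_iff.mp h
  obtain ⟨u, w, h1, _, h3⟩ := filter_split (by simpa [Fxt] using hl :
    t.filter (fun z => z == x || z == x + 1) = l ++ x :: [])
  obtain ⟨hw1, hw2⟩ := not_mem_of_Fxt_eq_nil h3
  exact ⟨u, w, h1, hw1, hw2⟩

lemma decomp_phead {x : ℕ} {u w : List ℕ} (h1 : x ∉ w) (h2 : x + 1 ∉ w) :
    Phead x (u ++ x :: w) := by
  unfold Phead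
  rw [Fxt_append, Fxt_cons_self, Fxt_eq_nil h1 h2]
  exact List.getLast?_concat

lemma not_phead_decomp {x : ℕ} {t : List ℕ} (hx : x ∈ t) (h : ¬ Phead x t) :
    ∃ u w, t = u ++ (x + 1) :: w ∧ x ∉ w := by
  have hne : Fxt x t ≠ [] := List.ne_nil_of_mem (self_mem_Fxt hx)
  obtain ⟨z, hz⟩ := Option.ne_none_iff_exists'.mp (fun hn => hne (List.getLast?_eq_none_iff.mp hn))
  have hzmem : z ∈ Fxt x t := List.mem_of_getLast? hz
  obtain ⟨_, hz2⟩ := mem_of_mem_Fxt hzmem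
  have hz3 : z = x + 1 := by
    rcases hz2 with rfl | rfl
    · exact absurd hz h
    · rfl
  subst hz3
  obtain ⟨l, hl⟩ := List.getLast?_eq_some_iff.mp hz
  obtain ⟨u, w, h1, _, h3⟩ := filter_split (by simpa [Fxt] using hl :
    t.filter (fun z => z == x || z == x + 1) = l ++ (x+1) :: [])
  exact ⟨u, w, h1, (not_mem_of_Fxt_eq_nil h3).1⟩

-- strTuple basics
lemma mem_strTuple {x a b : ℕ} : x ∈ strTuple a b ↔ a ≤ x ∧ x < b + 1 := by
  simp only [strTuple, List.mem_range']
  constructor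
  · rintro ⟨i, hi, rfl⟩; omega
  · rintro ⟨h1, h2⟩; exact ⟨x - a, by omega, by omega⟩

lemma strTuple_split {a b c : ℕ} (h1 : a ≤ c) (h2 : c ≤ b) :
    strTuple a b = List.range' a (c - a) ++ c :: List.range' (c + 1) (b - c) := by
  have e1 : List.range' a (c - a) ++ List.range' (a + 1 * (c - a)) ((b + 1 - a) - (c - a)) =
      List.range' a ((b + 1 - a) - (c - a) + (c - a)) := by rw [Nat.add_comm ((b + 1 - a) - (c - a))]; exact List.range'_append
  have e2 : a + 1 * (c - a) = c := by omega
  have e3 : (b + 1 - a) - (c - a) + (c - a) = b + 1 - a := by omega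
  have e4 : (b + 1 - a) - (c - a) = b - c + 1 := by omega
  rw [strTuple, ← e3, ← e1, e2, e4, List.range'_succ]

lemma strTuple_concat {a b : ℕ} (h : a ≤ b) :
    strTuple a b = List.range' a (b - a) ++ [b] := by
  have : b + 1 - a = (b - a) + 1 := by omega
  rw [strTuple, this, List.range'_concat]
  congr 2
  omega

lemma strTuple_cons {a b : ℕ} (h : a ≤ b) :
    strTuple a b = a :: strTuple (a + 1) b := by
  have : b + 1 - a = (b + 1 - (a + 1)) + 1 := by omega
  rw [strTuple, this, List.range'_succ, strTuple]

lemma strTuple_length (a b : ℕ) : (strTuple a b).length = b + 1 - a := by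
  simp [strTuple]

-- buildCSF basics
lemma buildCSF_cons (p : ℕ × ℕ) (ps : List (ℕ × ℕ)) :
    buildCSF (p :: ps) = strTuple p.1 p.2 ++ buildCSF ps := by
  simp [buildCSF]

lemma buildCSF_append (ps qs : List (ℕ × ℕ)) :
    buildCSF (ps ++ qs) = buildCSF ps ++ buildCSF qs := by
  simp [buildCSF]

lemma mem_buildCSF {x : ℕ} {ps : List (ℕ × ℕ)} (h : x ∈ buildCSF ps) :
    ∃ pr ∈ ps, pr.1 ≤ x ∧ x ≤ pr.2 := by
  simp only [buildCSF, List.mem_flatten, List.mem_map] at h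
  obtain ⟨l, ⟨pr, hpr, rfl⟩, hx⟩ := h
  rw [mem_strTuple] at hx
  exact ⟨pr, hpr, hx.1, by omega⟩

lemma head_mem_buildCSF {pr : ℕ × ℕ} {ps : List (ℕ × ℕ)} (hpr : pr ∈ ps) (h : pr.1 ≤ pr.2) :
    pr.2 ∈ buildCSF ps := by
  simp only [buildCSF, List.mem_flatten, List.mem_map]
  exact ⟨strTuple pr.1 pr.2, ⟨pr, hpr, rfl⟩, mem_strTuple.mpr ⟨h, by omega⟩⟩

/-- Heads of a CSF are intrinsic heads. -/
lemma csf_head_phead {ps : List (ℕ × ℕ)} (hps : IsCSFDecomp ps) {bb : ℕ}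
    (hb : bb ∈ ps.map Prod.snd) : Phead bb (buildCSF ps) := by
  obtain ⟨pr, hpr, hpr2⟩ := List.mem_map.mp hb
  obtain ⟨ps1, ps2, rfl⟩ := List.append_of_mem hpr
  have hle : pr.1 ≤ pr.2 := hps.1 pr hpr
  have hlt : ∀ qr ∈ ps2, qr.2 < bb := by
    intro qr hqr
    have hpw : List.Pairwise (· > ·) ((ps1 ++ pr :: ps2).map Prod.snd) :=
      List.isChain_iff_pairwise.mp hps.2
    rw [List.map_append, List.map_cons, List.pairwise_append] at hpw
    have := (List.pairwise_cons.mp hpw.2.1).1 qr.2 (List.mem_map_of_mem (f := Prod.snd) hqr)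
    rw [hpr2] at this
    exact this
  have hnot : ∀ z ∈ buildCSF ps2, z < bb := by
    intro z hz
    obtain ⟨qr, hqr, _, hz2⟩ := mem_buildCSF hz
    exact lt_of_le_of_lt hz2 (hlt qr hqr)
  have heq : buildCSF (ps1 ++ pr :: ps2) =
      (buildCSF ps1 ++ List.range' pr.1 (pr.2 - pr.1)) ++ bb :: buildCSF ps2 := by
    rw [buildCSF_append, buildCSF_cons, strTuple_concat hle, hpr2]
    simp
  rw [heq]
  exact decomp_phead (fun hm => absurd (hnot _ hm) (by omega))
    (fun hm => absurd (hnot _ hm) (by omega))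

/-- Intrinsic heads of a CSF are heads. -/
lemma csf_phead_head {ps : List (ℕ × ℕ)} (hps : IsCSFDecomp ps) {v : ℕ}
    (h : Phead v (buildCSF ps)) : v ∈ ps.map Prod.snd := by
  by_contra hv
  have key : ∀ qs : List (ℕ × ℕ), (∀ pr ∈ qs, pr.1 ≤ pr.2) → (∀ pr ∈ qs, pr.2 ≠ v) →
      (Fxt v (buildCSF qs)).getLast? = none ∨ (Fxt v (buildCSF qs)).getLast? = some (v + 1) := by
    intro qs
    induction qs with
    | nil => intro _ _; left; simp [buildCSF, Fxt]
    | cons p qs ih =>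
      intro h1 h2
      have hle : p.1 ≤ p.2 := h1 p (by simp)
      have hne : p.2 ≠ v := h2 p (by simp)
      have hstr : (Fxt v (strTuple p.1 p.2)).getLast? = none ∨
          (Fxt v (strTuple p.1 p.2)).getLast? = some (v + 1) := by
        rcases lt_or_ge p.2 v with hc | hc
        · left
          rw [Fxt_eq_nil (fun hm => by have := (mem_strTuple.mp hm).2; omega)
            (fun hm => by have := (mem_strTuple.mp hm).2; omega)]
          rfl
        · rcases lt_or_ge (v + 1) p.1 with hc2 | hc2
          · left
            rw [Fxt_eq_nil (fun hm => by have := (mem_strTuple.mp hm).1; omega)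
              (fun hm => by have := (mem_strTuple.mp hm).1; omega)]
            rfl
          · -- p.1 ≤ v+1 ≤ p.2 (using p.2 ≠ v so v < p.2)
            have hvb : v + 1 ≤ p.2 := by omega
            right
            have hnil : Fxt (v) (List.range' (v + 1 + 1) (p.2 - (v + 1))) = [] := by
              refine Fxt_eq_nil ?_ ?_ <;> intro hm <;>
                · have := List.mem_range'.mp hm
                  omega
            rw [strTuple_split hc2 hvb, Fxt_append, Fxt_cons_succ, hnil, List.getLast?_append]
            simp
      have hrest := ih (fun pr hpr => h1 pr (by simp [hpr])) (fun pr hpr => h2 pr (by simp [hpr]))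
      rw [buildCSF_cons, Fxt_append, List.getLast?_append]
      rcases hrest with hr | hr
      · rw [hr]
        simpa using hstr
      · rw [hr]
        right; rfl
  have := key ps hps.1 (fun pr hpr hpv => hv (hpv ▸ List.mem_map_of_mem (f := Prod.snd) hpr))
  unfold Phead at h
  rcases this with hh | hh <;> rw [h] at hh <;> simp at hh

lemma commute_one (w : List ℕ) (z : ℕ) :
    ∀ blk : List ℕ, (∀ y ∈ blk, z ≠ y ∧ z + 1 ≠ y ∧ y + 1 ≠ z) →
      TupleEquiv (z :: (blk ++ w)) (blk ++ z :: w) := by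
  intro blk
  induction blk with
  | nil => intro _; exact Relation.ReflTransGen.refl
  | cons y blk ih =>
    intro hc
    have hy := hc y (by simp)
    have step : CommuteStep (z :: (y :: blk ++ w)) (y :: (z :: (blk ++ w))) :=
      ⟨[], blk ++ w, z, y, hy.1, hy.2.1, hy.2.2, by simp, by simp⟩
    refine Relation.ReflTransGen.head step ?_
    have := tupleEquiv_append_left [y] (ih (fun y' hy' => hc y' (by simp [hy'])))
    simpa [TupleEquiv] using this

lemma commute_block (blk w : List ℕ) :
    ∀ u : List ℕ, (∀ z ∈ u, ∀ y ∈ blk, z ≠ y ∧ z + 1 ≠ y ∧ y + 1 ≠ z) →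
      TupleEquiv ((u ++ blk) ++ w) (blk ++ (u ++ w)) := by
  intro u
  induction u with
  | nil => intro _; exact Relation.ReflTransGen.refl
  | cons z u ih =>
    intro hc
    have h1 : TupleEquiv (z :: ((u ++ blk) ++ w)) (z :: (blk ++ (u ++ w))) := by
      have := tupleEquiv_append_left [z] (ih (fun z' hz' => hc z' (by simp [hz'])))
      simpa using this
    have h2 : TupleEquiv (z :: (blk ++ (u ++ w))) (blk ++ z :: (u ++ w)) :=
      commute_one (u ++ w) z blk (fun y hy => hc z (by simp) y hy)
    have := h1.trans h2
    simpa [TupleEquiv] using this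

lemma loop (M : ℕ) : ∀ c u w, c ≤ M → LSIP (u ++ (strTuple c M ++ w)) →
    (∀ i ∈ u, i < c) → (∀ i ∈ w, i < M) →
    ∃ c' t'', c' ≤ c ∧ (∀ i ∈ t'', i < M) ∧
      TupleEquiv (u ++ (strTuple c M ++ w)) (strTuple c' M ++ t'') := by
  intro c
  induction c with
  | zero =>
    intro u w hcM hsip hu hw
    have hu0 : u = [] := by
      cases u with
      | nil => rfl
      | cons a u => exact absurd (hu a (by simp)) (by omega)
    subst hu0
    exact ⟨0, w, le_refl _, hw, Relation.ReflTransGen.refl⟩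
  | succ d ih =>
    intro u w hcM hsip hu hw
    by_cases hd : d ∈ u
    · obtain ⟨u1, u2, rfl⟩ := List.append_of_mem hd
      have hdu1 : d ∉ u1 := by
        intro hmem
        obtain ⟨p, q, rfl⟩ := List.append_of_mem hmem
        have hq := hsip d p q (u2 ++ (strTuple (d + 1) M ++ w))
          (by simp [List.append_assoc])
        have := hu (d + 1) (by simp [hq])
        omega
      have hdu2 : d ∉ u2 := by
        intro hmem
        obtain ⟨p, q, rfl⟩ := List.append_of_mem hmem
        have hp := hsip d u1 p (q ++ (strTuple (d + 1) M ++ w))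
          (by simp [List.append_assoc])
        have := hu (d + 1) (by simp [hp])
        omega
      have hmove : TupleEquiv ((u2 ++ strTuple (d + 1) M) ++ w)
          (strTuple (d + 1) M ++ (u2 ++ w)) := by
        refine commute_block _ _ _ ?_
        intro z hz y hy
        have hz1 : z < d + 1 := hu z (by simp [hz])
        have hz2 : z ≠ d := fun h => hdu2 (h ▸ hz)
        have hy1 : d + 1 ≤ y := (mem_strTuple.mp hy).1
        omega
      have hmove2 : TupleEquiv ((u1 ++ d :: u2) ++ (strTuple (d + 1) M ++ w))
          (u1 ++ (strTuple d M ++ (u2 ++ w))) := by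
        have := tupleEquiv_append_left (u1 ++ [d]) hmove
        have e1 : (u1 ++ [d]) ++ ((u2 ++ strTuple (d + 1) M) ++ w) =
            (u1 ++ d :: u2) ++ (strTuple (d + 1) M ++ w) := by simp
        have e2 : (u1 ++ [d]) ++ (strTuple (d + 1) M ++ (u2 ++ w)) =
            u1 ++ (strTuple d M ++ (u2 ++ w)) := by
          rw [strTuple_cons (by omega : d ≤ M)]
          simp
        rw [e1, e2] at this
        exact this
      have hsip2 : LSIP (u1 ++ (strTuple d M ++ (u2 ++ w))) :=
        (tupleEquiv_lsip hmove2).mp hsip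
      obtain ⟨c', t'', hc1, hc2, hc3⟩ := ih u1 (u2 ++ w) (by omega) hsip2
        (fun i hi => by
          have h1 : i < d + 1 := hu i (by simp [hi])
          have h2 : i ≠ d := fun h => hdu1 (h ▸ hi)
          omega)
        (fun i hi => by
          rcases List.mem_append.mp hi with h | h
          · have := hu i (by simp [h]); omega
          · exact hw i h)
      exact ⟨c', t'', by omega, hc2, hmove2.trans hc3⟩
    · have hmove : TupleEquiv ((u ++ strTuple (d + 1) M) ++ w)
          (strTuple (d + 1) M ++ (u ++ w)) := by
        refine commute_block _ _ _ ?_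
        intro z hz y hy
        have hz1 : z < d + 1 := hu z hz
        have hz2 : z ≠ d := fun h => hd (h ▸ hz)
        have hy1 : d + 1 ≤ y := (mem_strTuple.mp hy).1
        omega
      refine ⟨d + 1, u ++ w, le_refl _, ?_, ?_⟩
      · intro i hi
        rcases List.mem_append.mp hi with h | h
        · have := hu i h; omega
        · exact hw i h
      · have e1 : (u ++ strTuple (d + 1) M) ++ w = u ++ (strTuple (d + 1) M ++ w) := by simp
        rw [e1] at hmove
        exact hmove

lemma extract {t : List ℕ} {M : ℕ} (hsip : LSIP t) (hM : M ∈ t) (hmax : ∀ i ∈ t, i ≤ M) :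
    ∃ c t'', c ≤ M ∧ (∀ i ∈ t'', i < M) ∧ TupleEquiv t (strTuple c M ++ t'') := by
  obtain ⟨u, w, rfl⟩ := List.append_of_mem hM
  have hMu : M ∉ u := by
    intro hmem
    obtain ⟨p, q, rfl⟩ := List.append_of_mem hmem
    have hq := hsip M p q w (by simp [List.append_assoc])
    have := hmax (M + 1) (by simp [hq])
    omega
  have hMw : M ∉ w := by
    intro hmem
    obtain ⟨p, q, rfl⟩ := List.append_of_mem hmem
    have hp := hsip M u p q (by simp [List.append_assoc])
    have := hmax (M + 1) (by simp [hp])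
    omega
  have hstrM : strTuple M M = [M] := by
    simp [strTuple]
  have heq : u ++ M :: w = u ++ (strTuple M M ++ w) := by rw [hstrM]; simp
  rw [heq] at hsip ⊢
  obtain ⟨c', t'', h1, h2, h3⟩ := loop M M u w (le_refl M) hsip
    (fun i hi => lt_of_le_of_ne (hmax i (by simp [heq, hi])) (fun h => hMu (h ▸ hi)))
    (fun i hi => lt_of_le_of_ne (hmax i (by simp [heq, hi])) (fun h => hMw (h ▸ hi)))
  exact ⟨c', t'', h1.trans (le_refl M), h2, h3⟩

lemma exists_max : ∀ t : List ℕ, t ≠ [] → ∃ M, M ∈ t ∧ ∀ i ∈ t, i ≤ M := by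
  intro t
  induction t with
  | nil => intro h; exact absurd rfl h
  | cons a t ih =>
    intro _
    cases t with
    | nil => exact ⟨a, by simp, by simp⟩
    | cons b t =>
      obtain ⟨M, hM1, hM2⟩ := ih (by simp)
      refine ⟨max a M, ?_, ?_⟩
      · rcases le_total a M with h | h
        · simp only [max_eq_right h]; exact List.mem_cons_of_mem a hM1
        · simp [max_eq_left h]
      · intro i hi
        rcases List.mem_cons.mp hi with rfl | hi
        · exact le_max_left _ _
        · exact le_trans (hM2 i hi) (le_max_right _ _)

lemma lsip_drop_prefix {p s : List ℕ} (h : LSIP (p ++ s)) : LSIP s := by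
  intro x u m w heq
  exact h x (p ++ u) m w (by rw [heq]; simp)

theorem exists_csf : ∀ n (t : List ℕ), t.length ≤ n → LSIP t →
    ∃ ps, IsCSFDecomp ps ∧ TupleEquiv t (buildCSF ps) := by
  intro n
  induction n with
  | zero =>
    intro t ht _
    have : t = [] := List.length_eq_zero_iff.mp (by omega)
    subst this
    exact ⟨[], ⟨by simp, List.isChain_nil⟩, Relation.ReflTransGen.refl⟩
  | succ n ih =>
    intro t ht hsip
    rcases eq_or_ne t [] with rfl | hne
    · exact ⟨[], ⟨by simp, List.isChain_nil⟩, Relation.ReflTransGen.refl⟩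
    obtain ⟨M, hM1, hM2⟩ := exists_max t hne
    obtain ⟨c, t'', hcM, ht'', hequiv⟩ := extract hsip hM1 hM2
    have hlen : t.length = (M + 1 - c) + t''.length := by
      have := (tupleEquiv_perm hequiv).length_eq
      rwa [List.length_append, strTuple_length] at this
    have hsip'' : LSIP t'' :=
      lsip_drop_prefix ((tupleEquiv_lsip hequiv).mp hsip)
    obtain ⟨ps', hps', hequiv'⟩ := ih t'' (by omega) hsip''
    refine ⟨(c, M) :: ps', ⟨?_, ?_⟩, ?_⟩
    · intro pr hpr
      rcases List.mem_cons.mp hpr with rfl | hpr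
      · exact hcM
      · exact hps'.1 pr hpr
    · rw [List.map_cons, show List.Chain' _ _ = List.IsChain _ _ from rfl, List.isChain_iff_pairwise, List.pairwise_cons]
      refine ⟨?_, List.isChain_iff_pairwise.mp hps'.2⟩
      intro h hh
      obtain ⟨pr, hpr, rfl⟩ := List.mem_map.mp hh
      have hmem : pr.2 ∈ buildCSF ps' := head_mem_buildCSF hpr (hps'.1 pr hpr)
      have hmem2 : pr.2 ∈ t'' := (tupleEquiv_perm hequiv').mem_iff.mpr hmem
      exact ht'' pr.2 hmem2
    · rw [buildCSF_cons]
      exact hequiv.trans (tupleEquiv_append_left _ hequiv')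

lemma getElem_append_cons_cases {u w : List ℕ} {y : ℕ} {i : ℕ} (h : i < (u ++ y :: w).length) :
    i < u.length ∨ (u ++ y :: w)[i] = y ∨ (u ++ y :: w)[i] ∈ w := by
  rcases lt_or_ge i u.length with h1 | h1
  · left; exact h1
  · right
    rw [List.getElem_append_right h1]
    rcases Nat.eq_or_lt_of_le h1 with h2 | h2
    · left
      have h3 : i - u.length = 0 := by omega
      simp only [h3, List.getElem_cons_zero]
    · right
      obtain ⟨j, hj⟩ : ∃ j, i - u.length = j + 1 := ⟨i - u.length - 1, by omega⟩
      simp only [hj, List.getElem_cons_succ]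
      exact List.getElem_mem _

lemma strTuple_getElem {a b j : ℕ} (h : j < (strTuple a b).length) :
    (strTuple a b)[j] = a + j := by
  simp [strTuple, List.getElem_range']


/-- Lemma: for a tuple `t` with indices from `{0,…,k-1}` and a string `(a:b)` with indices
from `{0,…,k-2}`, the concatenation `(t, a:b)` satisfies the SIP if and only if `t`
satisfies the SIP and no `c ∈ {a,…,b}` is a head of `t`. -/
theorem sip_append_string_iff (k : ℕ) (t : List ℕ) (ht : ∀ i ∈ t, i < k)
    (a b : ℕ) (hab : a ≤ b) (hb : b + 2 ≤ k) :
    SIP (t ++ strTuple a b) ↔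
      (SIP t ∧ ∀ c, a ≤ c → c ≤ b → c ∉ headsSet t) := by
  constructor
  · intro hsipfull
    have h := (sip_iff_lsip _).mp hsipfull
    refine ⟨(sip_iff_lsip t).mpr ?_, ?_⟩
    · intro x u m w heq
      exact h x u m (w ++ strTuple a b) (by rw [heq]; simp)
    · rintro c hac hcb ⟨ps, hps, hequiv, hmem⟩
      have hP : Phead c (buildCSF ps) := csf_head_phead hps hmem
      have hPt : Phead c t := (tupleEquiv_phead hequiv c).mpr hP
      obtain ⟨u, w, heq, hw1, hw2⟩ := phead_decomp hPt
      have hbig : t ++ strTuple a b =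
          u ++ c :: ((w ++ List.range' a (c - a)) ++ c :: List.range' (c + 1) (b - c)) := by
        rw [heq, strTuple_split hac hcb]
        simp
      have hmm := h c u (w ++ List.range' a (c - a)) (List.range' (c + 1) (b - c)) hbig
      rcases List.mem_append.mp hmm with hm | hm
      · exact hw2 hm
      · obtain ⟨i, hi1, hi2⟩ := List.mem_range'.mp hm
        omega
  · rintro ⟨hsip, hheads⟩
    have hlsip := (sip_iff_lsip t).mp hsip
    obtain ⟨ps, hcsf, hequiv⟩ := exists_csf t.length t (le_refl _) hlsip
    have hkey : ∀ v, a ≤ v → v ≤ b → v ∈ t →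
        ∃ u w, t = u ++ (v + 1) :: w ∧ v ∉ w := by
      intro v h1 h2 hv
      refine not_phead_decomp hv ?_
      intro hP
      exact hheads v h1 h2
        ⟨ps, hcsf, hequiv, csf_phead_head hcsf ((tupleEquiv_phead hequiv v).mp hP)⟩
    intro p q hpq heq
    have hsl : (strTuple a b).length = b + 1 - a := strTuple_length a b
    have htotal : (t ++ strTuple a b).length = t.length + (b + 1 - a) := by
      simp [hsl]
    have hpq' : p.val < q.val := hpq
    rcases lt_or_ge q.val t.length with hq | hq
    · -- both indices in t
      have hp : p.val < t.length := lt_trans hpq' hq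
      have hvp : (t ++ strTuple a b)[p.val]'p.isLt = t[p.val]'hp :=
        List.getElem_append_left hp
      have hvq : (t ++ strTuple a b)[q.val]'q.isLt = t[q.val]'hq :=
        List.getElem_append_left hq
      obtain ⟨c', hc1, hc2, hc3⟩ := hsip ⟨p.val, hp⟩ ⟨q.val, hq⟩ hpq'
        (by simp only [List.get_eq_getElem]
            simp only [List.get_eq_getElem] at heq
            rw [← hvp, ← hvq]; exact heq)
      have hc1' : p.val < c'.val := hc1
      have hc2' : c'.val < q.val := hc2
      have hcn : c'.val < t.length := c'.isLt
      refine ⟨⟨c'.val, by omega⟩, hc1', hc2', ?_⟩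
      simp only [List.get_eq_getElem] at hc3 ⊢
      rw [List.getElem_append_left hcn, List.getElem_append_left hp]
      exact hc3
    · rcases lt_or_ge p.val t.length with hp | hp
      · -- p in t, q in the string
        have hq2 := q.isLt
        have hqs : q.val - t.length < (strTuple a b).length := by omega
        have hvq : (t ++ strTuple a b)[q.val]'q.isLt = a + (q.val - t.length) := by
          rw [List.getElem_append_right hq, strTuple_getElem hqs]
        have hvp : (t ++ strTuple a b)[p.val]'p.isLt = t[p.val]'hp :=
          List.getElem_append_left hp
        have hxval : t[p.val]'hp = a + (q.val - t.length) := by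
          simp only [List.get_eq_getElem] at heq
          rw [hvp] at heq
          rw [heq]
          exact hvq
        have hxa : a ≤ t[p.val]'hp := by omega
        have hxb : t[p.val]'hp ≤ b := by omega
        obtain ⟨u, w, heqt, hxw⟩ := hkey _ hxa hxb (List.getElem_mem hp)
        have hlen0 := congrArg List.length heqt
        simp only [List.length_append, List.length_cons] at hlen0
        have hulen : u.length < t.length := by omega
        have hgp := List.getElem_of_eq heqt hp
        have hpu : p.val < u.length := by
          have hp' : p.val < (u ++ (t[p.val]'hp + 1) :: w).length := by
            rw [← heqt]; exact hp
          rcases getElem_append_cons_cases hp' with hcase | hcase | hcase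
          · exact hcase
          · rw [← hgp] at hcase; omega
          · rw [← hgp] at hcase; exact absurd hcase hxw
        refine ⟨⟨u.length, by omega⟩, hpu, by show u.length < q.val; omega, ?_⟩
        simp only [List.get_eq_getElem]
        rw [List.getElem_append_left hulen, List.getElem_append_left hp]
        rw [List.getElem_of_eq heqt hulen, List.getElem_append_right (le_refl u.length)]
        simp
      · -- both in the string: impossible
        exfalso
        have hq2 := q.isLt
        have hp2 := p.isLt
        have hqs : q.val - t.length < (strTuple a b).length := by omega
        have hps2 : p.val - t.length < (strTuple a b).length := by omega
        have h1 : (t ++ strTuple a b)[p.val]'p.isLt = a + (p.val - t.length) := by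
          rw [List.getElem_append_right hp, strTuple_getElem hps2]
        have h2 : (t ++ strTuple a b)[q.val]'q.isLt = a + (q.val - t.length) := by
          rw [List.getElem_append_right hq, strTuple_getElem hqs]
        simp only [List.get_eq_getElem] at heq
        rw [h1, h2] at heq
        omega
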